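/- Let y : [0, T] → ℝ be continuous, differentiable on (0, T), with y ≥ 0, and suppose (1/2) y'(t) + g(t) ≤ √(r(t)) · √(y(t) + g(t)) for nonnegative integrable functions g, r on (0,T). Then for all t ∈ [0, T]: y(t) + ∫₀ᵗ g(s) ds ≤ e^t ( y(0) + ∫₀ᵗ r(s) ds ). -/

import Mathlib

open MeasureTheory in
theorem stmt_16 (T : ℝ) (hT : 0 < T) (y y' g r : ℝ → ℝ)
    (hycont : ContinuousOn y (Set.Icc 0 T))
    (hyderiv : ∀ t ∈ Set.Ioo 0 T, HasDerivAt y (y' t) t)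
    (hynonneg : ∀ t ∈ Set.Icc 0 T, 0 ≤ y t)
    (hg : IntegrableOn g (Set.Icc 0 T)) (hgnonneg : ∀ t ∈ Set.Icc 0 T, 0 ≤ g t)
    (hr : IntegrableOn r (Set.Icc 0 T)) (hrnonneg : ∀ t ∈ Set.Icc 0 T, 0 ≤ r t)
    (hineq : ∀ t ∈ Set.Ioo 0 T,
      (1 / 2) * y' t + g t ≤ Real.sqrt (r t) * Real.sqrt (y t + g t)) :
    ∀ t ∈ Set.Icc 0 T,
      y t + (∫ s in (0:ℝ)..t, g s) ≤ Real.exp t * (y 0 + ∫ s in (0:ℝ)..t, r s) := by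
  intro t ht
  obtain ⟨ht0, htT⟩ := ht
  have hsub : Set.Icc (0:ℝ) t ⊆ Set.Icc 0 T := Set.Icc_subset_Icc le_rfl htT
  have hsub' : Set.Ioo (0:ℝ) t ⊆ Set.Ioo 0 T := Set.Ioo_subset_Ioo le_rfl htT
  set f : ℝ → ℝ := fun s => Real.exp (-s) * y s with hf
  set φ : ℝ → ℝ := fun s => Real.exp (-s) * (r s - g s) with hφ
  have hexp : ContinuousOn (fun s : ℝ => Real.exp (-s)) (Set.Icc 0 t) :=
    (Real.continuous_exp.comp continuous_neg).continuousOn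
  have hφint : IntegrableOn φ (Set.Icc 0 t) :=
    IntegrableOn.continuousOn_mul hexp
      (MeasureTheory.IntegrableOn.mono_set (hr.sub hg) hsub) isCompact_Icc
  have hfcont : ContinuousOn f (Set.Icc 0 t) := hexp.mul (hycont.mono hsub)
  have hfderiv : ∀ s ∈ Set.Ioo 0 t,
      HasDerivWithinAt f (Real.exp (-s) * (y' s - y s)) (Set.Ioi s) s := by
    intro s hs
    have h1 : HasDerivAt (fun s : ℝ => Real.exp (-s)) (-Real.exp (-s)) s := by
      simpa [Function.comp_def] using (Real.hasDerivAt_exp (-s)).comp s (hasDerivAt_neg s)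
    have h2 := h1.mul (hyderiv s (hsub' hs))
    have : HasDerivAt f (Real.exp (-s) * (y' s - y s)) s := by
      exact h2.congr_deriv (by ring)
    exact this.hasDerivWithinAt
  have hbound : ∀ s ∈ Set.Ioo 0 t, Real.exp (-s) * (y' s - y s) ≤ φ s := by
    intro s hs
    have hsT := hsub' hs
    have hsIcc : s ∈ Set.Icc 0 T := Set.mem_Icc.2 ⟨hsT.1.le, hsT.2.le⟩
    have h1 := hineq s hsT
    have hr0 := hrnonneg s hsIcc
    have hy0 := hynonneg s hsIcc
    have hg0 := hgnonneg s hsIcc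
    have hyg : 0 ≤ y s + g s := by linarith
    have hsq1 : Real.sqrt (r s) ^ 2 = r s := Real.sq_sqrt hr0
    have hsq2 : Real.sqrt (y s + g s) ^ 2 = y s + g s := Real.sq_sqrt hyg
    have key : y' s - y s ≤ r s - g s := by
      nlinarith [sq_nonneg (Real.sqrt (r s) - Real.sqrt (y s + g s))]
    exact mul_le_mul_of_nonneg_left key (Real.exp_pos (-s)).le
  have main := intervalIntegral.sub_le_integral_of_hasDeriv_right_of_le ht0 hfcont hfderiv hφint hbound
  -- compare φ with ψ s = r s - exp(-t) * g s
  set ψ : ℝ → ℝ := fun s => r s - Real.exp (-t) * g s with hψ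
  have hψint : IntegrableOn ψ (Set.Icc 0 t) :=
    (hr.mono_set hsub).sub ((hg.mono_set hsub).const_mul _)
  have hφle : ∀ s ∈ Set.Icc 0 t, φ s ≤ ψ s := by
    intro s hs
    obtain ⟨hs0, hst⟩ := hs
    have hsIcc : s ∈ Set.Icc 0 T := hsub ⟨hs0, hst⟩
    have hr0 := hrnonneg s hsIcc
    have hg0 := hgnonneg s hsIcc
    have h1 : Real.exp (-s) ≤ 1 := Real.exp_le_one_iff.2 (by linarith)
    have h2 : Real.exp (-t) ≤ Real.exp (-s) := Real.exp_le_exp.2 (by linarith)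
    have h3 : Real.exp (-s) * r s ≤ r s := by nlinarith
    have h4 : Real.exp (-t) * g s ≤ Real.exp (-s) * g s := by nlinarith
    simp only [hφ, hψ]; nlinarith
  have hmono : (∫ s in (0:ℝ)..t, φ s) ≤ ∫ s in (0:ℝ)..t, ψ s := by
    apply intervalIntegral.integral_mono_on ht0
    · exact (intervalIntegrable_iff_integrableOn_Icc_of_le ht0).2 hφint
    · exact (intervalIntegrable_iff_integrableOn_Icc_of_le ht0).2 hψint
    · exact hφle
  have hgint : IntervalIntegrable g volume 0 t :=
    (intervalIntegrable_iff_integrableOn_Icc_of_le ht0).2 (hg.mono_set hsub)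
  have hrint : IntervalIntegrable r volume 0 t :=
    (intervalIntegrable_iff_integrableOn_Icc_of_le ht0).2 (hr.mono_set hsub)
  have hψeq : (∫ s in (0:ℝ)..t, ψ s)
      = (∫ s in (0:ℝ)..t, r s) - Real.exp (-t) * ∫ s in (0:ℝ)..t, g s := by
    rw [hψ]
    rw [intervalIntegral.integral_sub hrint (hgint.const_mul _),
      intervalIntegral.integral_const_mul]
  have hf0 : f 0 = y 0 := by simp [hf]
  have hmain2 : Real.exp (-t) * y t + Real.exp (-t) * (∫ s in (0:ℝ)..t, g s)
      ≤ y 0 + ∫ s in (0:ℝ)..t, r s := by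
    have := main.trans hmono
    rw [hψeq, hf0] at this
    simp only [hf] at this
    linarith
  have hE : (0:ℝ) < Real.exp t := Real.exp_pos t
  have hEe : Real.exp t * Real.exp (-t) = 1 := by
    rw [← Real.exp_add]; simp
  have h6 := mul_le_mul_of_nonneg_left hmain2 hE.le
  have hyt : Real.exp t * (Real.exp (-t) * y t) = y t := by
    rw [← mul_assoc, hEe, one_mul]
  have hGt : Real.exp t * (Real.exp (-t) * ∫ s in (0:ℝ)..t, g s)
      = ∫ s in (0:ℝ)..t, g s := by
    rw [← mul_assoc, hEe, one_mul]
  linarith [h6, hyt, hGt]
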